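/- Let K_X and K_Y be real symmetric positive semidefinite M×M matrices with Tr K_X = Tr K_Y = 1 and K_X ≠ K_Y. Then the squared Bures distance satisfies d_B(K_X, K_Y)² ≥ 2 − √(4 − 2 ‖K_X − K_Y‖_F²), where d_B(K_X, K_Y)² = 2 − 2 Tr[(K_X^{1/2} K_Y K_X^{1/2})^{1/2}] and ‖·‖_F is the Frobenius norm. -/

import Mathlib

open Matrix

/-- The squared Frobenius norm of a real matrix. -/
def frobSq {m n : Type*} [Fintype m] [Fintype n] (A : Matrix m n ℝ) : ℝ :=
  ∑ i, ∑ j, A i j ^ 2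

open scoped ComplexOrder in
/-- The positive semidefinite square root of a positive semidefinite matrix
(the definition of Mathlib of December 2024, since removed). -/
noncomputable def Matrix.PosSemidef.sqrt {n 𝕜 : Type*} [Fintype n] [DecidableEq n] [RCLike 𝕜]
    {A : Matrix n n 𝕜} (hA : A.PosSemidef) : Matrix n n 𝕜 :=
  (hA.1.eigenvectorUnitary : Matrix n n 𝕜) * diagonal ((↑) ∘ (√·) ∘ hA.1.eigenvalues) *
    (star hA.1.eigenvectorUnitary : Matrix n n 𝕜)

open scoped ComplexOrder in
lemma Matrix.PosSemidef.posSemidef_sqrt {n 𝕜 : Type*} [Fintype n] [DecidableEq n] [RCLike 𝕜]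
    {A : Matrix n n 𝕜} (hA : A.PosSemidef) : hA.sqrt.PosSemidef := by
  have hD : (diagonal ((↑) ∘ (√·) ∘ hA.1.eigenvalues) : Matrix n n 𝕜).PosSemidef := by
    rw [posSemidef_diagonal_iff]
    intro i
    simp [Real.sqrt_nonneg]
  have := hD.mul_mul_conjTranspose_same (hA.1.eigenvectorUnitary : Matrix n n 𝕜)
  simpa [Matrix.PosSemidef.sqrt, Matrix.star_eq_conjTranspose] using this

lemma posSemidef_sqrt_mul_self_real {M : ℕ} {K : Matrix (Fin M) (Fin M) ℝ}
    (hK : K.PosSemidef) : hK.sqrt * hK.sqrt = K := by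
  have hU : star (hK.1.eigenvectorUnitary : Matrix (Fin M) (Fin M) ℝ) *
      (hK.1.eigenvectorUnitary : Matrix (Fin M) (Fin M) ℝ) = 1 :=
    Matrix.mem_unitaryGroup_iff'.mp hK.1.eigenvectorUnitary.2
  have hD : (diagonal ((↑) ∘ (√·) ∘ hK.1.eigenvalues) : Matrix (Fin M) (Fin M) ℝ) *
      diagonal ((↑) ∘ (√·) ∘ hK.1.eigenvalues) = diagonal (RCLike.ofReal ∘ hK.1.eigenvalues) := by
    rw [diagonal_mul_diagonal]
    congr 1
    funext i
    simp [Real.mul_self_sqrt (hK.eigenvalues_nonneg i)]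
  conv_rhs => rw [hK.1.spectral_theorem, Unitary.conjStarAlgAut_apply]
  simp only [Matrix.PosSemidef.sqrt]
  rw [← hD]
  simp only [Matrix.mul_assoc]
  rw [← Matrix.mul_assoc (star _) _ _, hU, Matrix.one_mul]
  rfl

lemma sqrt_mul_mul_sqrt_posSemidef {M : ℕ} {KX KY : Matrix (Fin M) (Fin M) ℝ}
    (hX : KX.PosSemidef) (hY : KY.PosSemidef) :
    (hX.sqrt * KY * hX.sqrt).PosSemidef := by
  have h := hY.mul_mul_conjTranspose_same hX.sqrt
  rwa [hX.posSemidef_sqrt.isHermitian.eq] at h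

/-- The fidelity `F(K_X, K_Y) = Tr[(K_X^{1/2} K_Y K_X^{1/2})^{1/2}]` between positive
semidefinite matrices. -/
noncomputable def fidelity {M : ℕ} {KX KY : Matrix (Fin M) (Fin M) ℝ}
    (hX : KX.PosSemidef) (hY : KY.PosSemidef) : ℝ :=
  (sqrt_mul_mul_sqrt_posSemidef hX hY).sqrt.trace

lemma Gsum {m k : Type*} [Fintype m] [Fintype k] (α β γ δ : Matrix m k ℝ) :
    ∑ x : m × k, ∑ y : m × k, α x.1 x.2 * β y.1 y.2 * (γ x.1 y.2 * δ y.1 x.2)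
      = trace (αᵀ * γ * (βᵀ * δ)) := by
  simp only [trace, diag, mul_apply, transpose_apply, Fintype.sum_prod_type,
    Finset.sum_mul, Finset.mul_sum]
  rw [Finset.sum_comm]
  conv_lhs => enter [2, b]; rw [Finset.sum_comm]
  conv_lhs => enter [2, b, 2, d]; rw [Finset.sum_comm]
  conv_lhs => enter [2, b]; rw [Finset.sum_comm]
  refine Finset.sum_congr rfl fun b _ => Finset.sum_congr rfl fun c _ =>
    Finset.sum_congr rfl fun d _ => Finset.sum_congr rfl fun a _ => by ring

lemma dot_eq_trace {m k : Type*} [Fintype m] [Fintype k] (α β : Matrix m k ℝ) :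
    ∑ x : m × k, α x.1 x.2 * β x.1 x.2 = trace (αᵀ * β) := by
  simp only [trace, diag, mul_apply, transpose_apply, Fintype.sum_prod_type]
  rw [Finset.sum_comm]

lemma trace_sq_transpose {m k : Type*} [Fintype m] [Fintype k] (ψ φ : Matrix m k ℝ) :
    trace (φᵀ * ψ * (φᵀ * ψ)) = trace (ψᵀ * φ * (ψᵀ * φ)) := by
  rw [← trace_transpose]
  simp only [transpose_mul, transpose_transpose]
  try rw [trace_mul_comm]

lemma core_cs {m k : Type*} [Fintype m] [Fintype k] (ψ φ : Matrix m k ℝ) :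
    trace (ψᵀ * ψ * (ψᵀ * ψ)) + trace (φᵀ * φ * (φᵀ * φ)) - 2 * trace (ψᵀ * φ * (ψᵀ * φ))
      ≤ (trace (ψᵀ * ψ))^2 + (trace (φᵀ * φ))^2 - 2 * (trace (ψᵀ * φ))^2 := by
  classical
  set ι := (m × k) × (m × k) with hι
  set f : ι → ℝ := fun p => ψ p.1.1 p.1.2 * ψ p.2.1 p.2.2 - φ p.1.1 p.1.2 * φ p.2.1 p.2.2 with hf
  set g : ι → ℝ := fun p => ψ p.1.1 p.2.2 * ψ p.2.1 p.1.2 - φ p.1.1 p.2.2 * φ p.2.1 p.1.2 with hg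
  have hfg : ∑ p : ι, f p * g p
      = trace (ψᵀ * ψ * (ψᵀ * ψ)) + trace (φᵀ * φ * (φᵀ * φ))
        - 2 * trace (ψᵀ * φ * (ψᵀ * φ)) := by
    calc ∑ p : ι, f p * g p
        = ∑ x : m × k, ∑ y : m × k,
            (ψ x.1 x.2 * ψ y.1 y.2 * (ψ x.1 y.2 * ψ y.1 x.2)
            - ψ x.1 x.2 * ψ y.1 y.2 * (φ x.1 y.2 * φ y.1 x.2)
            - φ x.1 x.2 * φ y.1 y.2 * (ψ x.1 y.2 * ψ y.1 x.2)
            + φ x.1 x.2 * φ y.1 y.2 * (φ x.1 y.2 * φ y.1 x.2)) := by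
          rw [Fintype.sum_prod_type]
          exact Finset.sum_congr rfl fun x _ => Finset.sum_congr rfl fun y _ => by
            simp only [hf, hg]; ring
      _ = (∑ x : m × k, ∑ y : m × k, ψ x.1 x.2 * ψ y.1 y.2 * (ψ x.1 y.2 * ψ y.1 x.2))
          - (∑ x : m × k, ∑ y : m × k, ψ x.1 x.2 * ψ y.1 y.2 * (φ x.1 y.2 * φ y.1 x.2))
          - (∑ x : m × k, ∑ y : m × k, φ x.1 x.2 * φ y.1 y.2 * (ψ x.1 y.2 * ψ y.1 x.2))
          + (∑ x : m × k, ∑ y : m × k, φ x.1 x.2 * φ y.1 y.2 * (φ x.1 y.2 * φ y.1 x.2)) := by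
          simp only [Finset.sum_add_distrib, Finset.sum_sub_distrib]
      _ = trace (ψᵀ * ψ * (ψᵀ * ψ)) + trace (φᵀ * φ * (φᵀ * φ))
            - 2 * trace (ψᵀ * φ * (ψᵀ * φ)) := by
          rw [Gsum ψ ψ ψ ψ, Gsum ψ ψ φ φ, Gsum φ φ ψ ψ, Gsum φ φ φ φ,
            trace_sq_transpose ψ φ]
          ring
  have hff : ∑ p : ι, f p ^ 2
      = (trace (ψᵀ * ψ))^2 + (trace (φᵀ * φ))^2 - 2 * (trace (ψᵀ * φ))^2 := by
    calc ∑ p : ι, f p ^ 2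
        = ∑ x : m × k, ∑ y : m × k,
            (ψ x.1 x.2 * ψ x.1 x.2 * (ψ y.1 y.2 * ψ y.1 y.2)
            - 2 * (ψ x.1 x.2 * φ x.1 x.2 * (ψ y.1 y.2 * φ y.1 y.2))
            + φ x.1 x.2 * φ x.1 x.2 * (φ y.1 y.2 * φ y.1 y.2)) := by
          rw [Fintype.sum_prod_type]
          exact Finset.sum_congr rfl fun x _ => Finset.sum_congr rfl fun y _ => by
            simp only [hf]; ring
      _ = (∑ x : m × k, ψ x.1 x.2 * ψ x.1 x.2) * (∑ y : m × k, ψ y.1 y.2 * ψ y.1 y.2)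
          - 2 * ((∑ x : m × k, ψ x.1 x.2 * φ x.1 x.2) * (∑ y : m × k, ψ y.1 y.2 * φ y.1 y.2))
          + (∑ x : m × k, φ x.1 x.2 * φ x.1 x.2) * (∑ y : m × k, φ y.1 y.2 * φ y.1 y.2) := by
          simp only [Finset.sum_add_distrib, Finset.sum_sub_distrib, ← Finset.sum_mul,
            ← Finset.mul_sum]
      _ = (trace (ψᵀ * ψ))^2 + (trace (φᵀ * φ))^2 - 2 * (trace (ψᵀ * φ))^2 := by
          rw [dot_eq_trace ψ ψ, dot_eq_trace φ φ, dot_eq_trace ψ φ]; ring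
  have hgg : ∑ p : ι, g p ^ 2 = ∑ p : ι, f p ^ 2 := by
    apply Fintype.sum_equiv ⟨fun p => ((p.1.1, p.2.2), (p.2.1, p.1.2)),
      fun p => ((p.1.1, p.2.2), (p.2.1, p.1.2)), fun p => rfl, fun p => rfl⟩
    intro p; rfl
  have hcs := Finset.sum_mul_sq_le_sq_mul_sq Finset.univ f g
  rw [hgg, hff] at hcs
  have hnn : (0:ℝ) ≤ ∑ p : ι, f p ^ 2 := Finset.sum_nonneg fun p _ => sq_nonneg _
  rw [hff] at hnn
  nlinarith [hfg, hcs, hnn]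

lemma trace_mul_mul_comm {m k : Type*} [Fintype m] [Fintype k]
    (P : Matrix m k ℝ) (Q : Matrix k m ℝ) :
    trace (Q * P * (Q * P)) = trace (P * Q * (P * Q)) := by
  simp only [Matrix.mul_assoc]
  rw [trace_mul_comm]
  simp only [Matrix.mul_assoc]

lemma trace_transpose_mul_quad {m k : Type*} [Fintype m] [Fintype k] (U V : Matrix m k ℝ) :
    trace ((Uᵀ * V)ᵀ * (Uᵀ * V)) = trace (U * Uᵀ * (V * Vᵀ)) := by
  rw [transpose_mul, transpose_transpose]
  simp only [Matrix.mul_assoc]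
  rw [trace_mul_comm]
  simp only [Matrix.mul_assoc]

lemma trace_mul_self_le {k : Type*} [Fintype k] (R : Matrix k k ℝ) :
    trace (R * R) ≤ trace (Rᵀ * R) := by
  have e1 : trace (Rᵀ * R) = ∑ j, ∑ i, R i j * R i j := by
    simp [trace, mul_apply, transpose_apply, diag]
  have e2 : trace (R * R) = ∑ j, ∑ i, R j i * R i j := by
    simp [trace, mul_apply, diag]
  have h0 : (0:ℝ) ≤ ∑ j, ∑ i, (R i j - R j i)^2 :=
    Finset.sum_nonneg fun _ _ => Finset.sum_nonneg fun _ _ => sq_nonneg _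
  have hexp : ∑ j, ∑ i, (R i j - R j i)^2
      = (∑ j, ∑ i, R i j * R i j) + (∑ j, ∑ i, R j i * R j i)
        - 2 * ∑ j, ∑ i, R j i * R i j := by
    have h : ∀ j i, (R i j - R j i)^2
        = R i j * R i j + R j i * R j i - 2 * (R j i * R i j) := by intros; ring
    simp only [h, Finset.sum_add_distrib, Finset.sum_sub_distrib, ← Finset.mul_sum]
  have hsym : ∑ j, ∑ i, R j i * R j i = ∑ j, ∑ i, R i j * R i j := Finset.sum_comm
  rw [e1, e2]; rw [hsym] at hexp; linarith

set_option maxHeartbeats 1000000 in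
/-- For real symmetric positive semidefinite `M × M` matrices `K_X ≠ K_Y`
with `Tr K_X = Tr K_Y = 1`, the squared Bures distance `d_B² = 2 − 2 F(K_X, K_Y)` satisfies
`d_B² ≥ 2 − √(4 − 2 ‖K_X − K_Y‖_F²)`. -/
theorem bures_distance_sq_lower_bound_trace_one
    {M : ℕ} (KX KY : Matrix (Fin M) (Fin M) ℝ)
    (hX : KX.PosSemidef) (hY : KY.PosSemidef)
    (htrX : KX.trace = 1) (htrY : KY.trace = 1) (hne : KX ≠ KY) :
    2 - Real.sqrt (4 - 2 * frobSq (KX - KY)) ≤ 2 - 2 * fidelity hX hY := by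
  classical
  have hS : (hX.sqrt * KY * hX.sqrt).PosSemidef := sqrt_mul_mul_sqrt_posSemidef hX hY
  set A : Matrix (Fin M) (Fin M) ℝ := hX.sqrt with hAdef
  set B : Matrix (Fin M) (Fin M) ℝ := hY.sqrt with hBdef
  have hAt : Aᵀ = A := by
    rw [← conjTranspose_eq_transpose_of_trivial, hX.posSemidef_sqrt.isHermitian.eq]
  have hBt : Bᵀ = B := by
    rw [← conjTranspose_eq_transpose_of_trivial, hY.posSemidef_sqrt.isHermitian.eq]
  have hAA : A * A = KX := posSemidef_sqrt_mul_self_real hX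
  have hBB : B * B = KY := posSemidef_sqrt_mul_self_real hY
  -- spectral calculus
  set Vm : Matrix (Fin M) (Fin M) ℝ := (hS.1.eigenvectorUnitary : Matrix (Fin M) (Fin M) ℝ)
    with hVm
  have hVsV : star Vm * Vm = 1 := Matrix.mem_unitaryGroup_iff'.mp hS.1.eigenvectorUnitary.2
  set W : (Fin M → ℝ) → Matrix (Fin M) (Fin M) ℝ := fun a => Vm * diagonal a * star Vm with hW
  have hWmul : ∀ a b : Fin M → ℝ, W a * W b = W (fun i => a i * b i) := by
    intro a b
    simp only [hW]
    calc Vm * diagonal a * star Vm * (Vm * diagonal b * star Vm)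
        = Vm * diagonal a * (star Vm * Vm) * (diagonal b * star Vm) := by
          simp only [Matrix.mul_assoc]
      _ = Vm * (diagonal a * diagonal b) * star Vm := by
          rw [hVsV, Matrix.mul_one]; simp only [Matrix.mul_assoc]
      _ = Vm * diagonal (fun i => a i * b i) * star Vm := by
          rw [diagonal_mul_diagonal]
  have hWtrace : ∀ a : Fin M → ℝ, trace (W a) = ∑ i, a i := by
    intro a
    simp only [hW]
    rw [trace_mul_cycle, hVsV, Matrix.one_mul, trace_diagonal]
  have hWt : ∀ a : Fin M → ℝ, (W a)ᵀ = W a := by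
    intro a
    rw [← conjTranspose_eq_transpose_of_trivial]
    simp [hW, conjTranspose_mul, diagonal_conjTranspose, Matrix.mul_assoc,
      Matrix.star_eq_conjTranspose, Matrix.conjTranspose_eq_transpose_of_trivial,
      transpose_transpose]
  set e : Fin M → ℝ := hS.1.eigenvalues with he
  have henn : ∀ i, 0 ≤ e i := fun i => hS.eigenvalues_nonneg i
  set s : Fin M → ℝ := fun i => Real.sqrt (e i) with hs
  set p : Fin M → ℝ := fun i => if s i = 0 then 0 else (s i)⁻¹ with hp
  have hCW : hS.sqrt = W s := by
    simp only [Matrix.PosSemidef.sqrt, hW]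
    congr 1
  have hSW : A * KY * A = W e := by
    conv_lhs => rw [hAdef, hS.1.spectral_theorem, Unitary.conjStarAlgAut_apply]
    simp only [hW]
    congr 1
  set C : Matrix (Fin M) (Fin M) ℝ := W s with hC
  -- the X matrix
  set X : Matrix (Fin M) (Fin M) ℝ := A * B with hXdef
  have hXXt : X * Xᵀ = W e := by
    rw [hXdef, transpose_mul, hAt, hBt, ← hSW, ← hBB]
    simp only [Matrix.mul_assoc]
  -- pieces
  set Cp : Matrix (Fin M) (Fin M) ℝ := W p with hCp
  set Q0 : Matrix (Fin M) (Fin M) ℝ := Xᵀ * W (fun i => p i * p i) * X with hQ0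
  have hpep : (fun i => (p i * p i) * (e i * (p i * p i))) = fun i => p i * p i := by
    funext i
    by_cases h : s i = 0
    · simp [hp, h]
    · have hsq : s i * s i = e i := Real.mul_self_sqrt (henn i)
      simp only [hp, if_neg h]
      field_simp
      nlinarith [hsq]
  have hep : (fun i => e i * p i) = s := by
    funext i
    by_cases h : s i = 0
    · have h0 : e i = 0 := by
        have h1 : s i * s i = e i := Real.mul_self_sqrt (henn i)
        rw [h] at h1
        linarith
      simp [hp, h, h0]
    · have hsq : s i * s i = e i := Real.mul_self_sqrt (henn i)
      simp only [hp, if_neg h]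
      field_simp
      nlinarith [hsq]
  have hQ0t : Q0ᵀ = Q0 := by
    rw [hQ0]
    simp only [transpose_mul, transpose_transpose, hWt]
    simp only [Matrix.mul_assoc]
  have hQ0proj : Q0 * Q0 = Q0 := by
    rw [hQ0]
    calc Xᵀ * W (fun i => p i * p i) * X * (Xᵀ * W (fun i => p i * p i) * X)
        = Xᵀ * (W (fun i => p i * p i) * ((X * Xᵀ) * (W (fun i => p i * p i) * X))) := by
          simp only [Matrix.mul_assoc]
      _ = Xᵀ * (W (fun i => p i * p i) * (W e * W (fun i => p i * p i)) * X) := by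
          rw [hXXt]; simp only [Matrix.mul_assoc]
      _ = Xᵀ * (W (fun i => (p i * p i) * (e i * (p i * p i))) * X) := by
          rw [hWmul, hWmul]
      _ = Xᵀ * W (fun i => p i * p i) * X := by
          rw [hpep]; simp only [Matrix.mul_assoc]
  set φ₁ : Matrix (Fin M) (Fin M) ℝ := B * Xᵀ * Cp with hφ₁def
  have hAφ₁ : A * φ₁ = C := by
    rw [hφ₁def, hCp, hC]
    calc A * (B * Xᵀ * Cp) = X * Xᵀ * W p := by
          rw [hXdef]; simp only [Matrix.mul_assoc, hCp]
      _ = W e * W p := by rw [hXXt]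
      _ = W s := by rw [hWmul, hep]
  have hφ₁φ₁ : φ₁ * φ₁ᵀ = B * Q0 * B := by
    rw [hφ₁def, hQ0]
    simp only [transpose_mul, transpose_transpose, hWt, hBt, hCp]
    calc B * Xᵀ * W p * (W p * (X * B))
        = B * (Xᵀ * (W p * W p) * (X * B)) := by simp only [Matrix.mul_assoc]
      _ = B * (Xᵀ * W (fun i => p i * p i) * X) * B := by
          rw [hWmul]; simp only [Matrix.mul_assoc]
  set φ₂ : Matrix (Fin M) (Fin M) ℝ := B * (1 - Q0) with hφ₂def
  have hφ₂φ₂ : φ₂ * φ₂ᵀ = B * (1 - Q0) * B := by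
    rw [hφ₂def]
    have h1 : (1 - Q0)ᵀ = 1 - Q0 := by
      rw [transpose_sub, transpose_one, hQ0t]
    have h2 : (1 - Q0) * (1 - Q0) = 1 - Q0 := by
      simp only [Matrix.mul_sub, Matrix.sub_mul, Matrix.one_mul, Matrix.mul_one, hQ0proj]
      abel
    rw [transpose_mul, h1, hBt]
    calc B * (1 - Q0) * ((1 - Q0) * B) = B * ((1 - Q0) * (1 - Q0)) * B := by
          simp only [Matrix.mul_assoc]
      _ = B * (1 - Q0) * B := by rw [h2]
  have hφφ : φ₁ * φ₁ᵀ + φ₂ * φ₂ᵀ = KY := by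
    rw [hφ₁φ₁, hφ₂φ₂, ← hBB]
    simp only [Matrix.mul_sub, Matrix.sub_mul, Matrix.mul_one, Matrix.one_mul]
    abel
  -- purification matrices
  set ψ : Matrix (Fin M) (Fin M ⊕ Fin M) ℝ := fromCols A 0 with hψdef
  set φm : Matrix (Fin M) (Fin M ⊕ Fin M) ℝ := fromCols φ₁ φ₂ with hφmdef
  have hψψ : ψ * ψᵀ = KX := by
    rw [hψdef, transpose_fromCols, fromCols_mul_fromRows, hAt, hAA]
    simp
  have hφmφm : φm * φmᵀ = KY := by
    rw [hφmdef, transpose_fromCols, fromCols_mul_fromRows, hφφ]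
  have htrψψ : trace (ψᵀ * ψ) = 1 := by rw [trace_mul_comm, hψψ, htrX]
  have htrφφ : trace (φmᵀ * φm) = 1 := by rw [trace_mul_comm, hφmφm, htrY]
  have htrq1 : trace (ψᵀ * ψ * (ψᵀ * ψ)) = trace (KX * KX) := by
    rw [trace_mul_mul_comm ψ ψᵀ, hψψ]
  have htrq2 : trace (φmᵀ * φm * (φmᵀ * φm)) = trace (KY * KY) := by
    rw [trace_mul_mul_comm φm φmᵀ, hφmφm]
  have htrR : trace (ψᵀ * φm) = trace C := by
    rw [trace_mul_comm, hψdef, hφmdef, transpose_fromCols, fromCols_mul_fromRows, hAt]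
    simp only [transpose_zero, Matrix.mul_zero, add_zero]
    rw [trace_mul_comm, hAφ₁]
  have hRtrace : trace ((ψᵀ * φm)ᵀ * (ψᵀ * φm)) = trace (KX * KY) := by
    rw [trace_transpose_mul_quad, hψψ, hφmφm]
  have hRle := trace_mul_self_le (ψᵀ * φm)
  have hKXt : KXᵀ = KX := by
    rw [← conjTranspose_eq_transpose_of_trivial, hX.isHermitian.eq]
  have hKYt : KYᵀ = KY := by
    rw [← conjTranspose_eq_transpose_of_trivial, hY.isHermitian.eq]
  have hfrob : frobSq (KX - KY)
      = trace (KX * KX) + trace (KY * KY) - 2 * trace (KX * KY) := by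
    have h1 : frobSq (KX - KY) = trace ((KX - KY) * (KX - KY)ᵀ) := by
      simp [frobSq, trace, mul_apply, diag, transpose_apply, pow_two]
    rw [h1, transpose_sub, hKXt, hKYt]
    simp only [Matrix.mul_sub, Matrix.sub_mul, trace_sub]
    rw [trace_mul_comm KY KX]
    ring
  have hcs := core_cs ψ φm
  rw [htrq1, htrq2, htrR, htrψψ, htrφφ] at hcs
  have hmain : frobSq (KX - KY) ≤ 2 - 2 * (trace C)^2 := by
    rw [hfrob, ← hRtrace]
    nlinarith [hcs, hRle]
  have hFnn : 0 ≤ trace C := by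
    rw [hC, hWtrace]
    exact Finset.sum_nonneg fun i _ => Real.sqrt_nonneg _
  have hFid : fidelity hX hY = trace C := by
    show (sqrt_mul_mul_sqrt_posSemidef hX hY).sqrt.trace = trace C
    have hpr : (sqrt_mul_mul_sqrt_posSemidef hX hY).sqrt = hS.sqrt := rfl
    rw [hpr, hCW, hC]
  have h2F : 2 * trace C ≤ Real.sqrt (4 - 2 * frobSq (KX - KY)) := by
    have hsq : (2 * trace C)^2 ≤ 4 - 2 * frobSq (KX - KY) := by nlinarith [hmain]
    calc 2 * trace C = Real.sqrt ((2 * trace C)^2) := (Real.sqrt_sq (by linarith)).symm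
      _ ≤ Real.sqrt (4 - 2 * frobSq (KX - KY)) := Real.sqrt_le_sqrt hsq
  rw [hFid]
  linarith
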